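/- If the covariate density f is identifiable (known) and β ≠ 0, then the intercept α is identifiable: if ∫ φ(α+βᵀx) f(x) dx determines f₁(x) = φ(α+βᵀx)f(x)/c and two intercepts α ≠ α' with the same slope β and same density f produce the same case density f₁, then α = α'. Equivalently, the map α ↦ f₁ is injective for fixed β and f with f positive on a set of positive measure where βᵀx takes at least two distinct values. -/

import Mathlib

open Real Matrix MeasureTheory

/-- The logistic function φ(t) = eᵗ/(1+eᵗ). -/
noncomputable def phi (t : ℝ) : ℝ := Real.exp t / (1 + Real.exp t)

/-- If the covariate density f is known and β ≠ 0 (witnessed by two support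
points where βᵀx takes distinct values), then the intercept is identifiable:
two intercepts producing the same case density f₁(x) = φ(α+βᵀx)f(x)/c(α)
must coincide. -/
theorem intercept_identifiable_known_density {d : ℕ}
    (α α' : ℝ) (β : Fin d → ℝ) (f : (Fin d → ℝ) → ℝ)
    (cα cα' : ℝ)
    (hcα : cα = ∫ x, phi (α + β ⬝ᵥ x) * f x)
    (hcα' : cα' = ∫ x, phi (α' + β ⬝ᵥ x) * f x)
    (hcα01 : 0 < cα ∧ cα < 1) (hcα'01 : 0 < cα' ∧ cα' < 1)
    (x₁ x₂ : Fin d → ℝ) (hx₁ : 0 < f x₁) (hx₂ : 0 < f x₂)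
    (hsep : β ⬝ᵥ x₁ ≠ β ⬝ᵥ x₂)
    (heq : ∀ x, phi (α + β ⬝ᵥ x) * f x / cα = phi (α' + β ⬝ᵥ x) * f x / cα') :
    α = α' := by
  set t₁ := β ⬝ᵥ x₁ with ht₁
  set t₂ := β ⬝ᵥ x₂ with ht₂
  have h1 := heq x₁
  have h2 := heq x₂
  simp only [phi, ← ht₁, ← ht₂] at h1 h2
  have d1 : (0:ℝ) < 1 + Real.exp (α + t₁) := by positivity
  have d2 : (0:ℝ) < 1 + Real.exp (α' + t₁) := by positivity
  have d3 : (0:ℝ) < 1 + Real.exp (α + t₂) := by positivity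
  have d4 : (0:ℝ) < 1 + Real.exp (α' + t₂) := by positivity
  field_simp [hcα01.1.ne', hcα'01.1.ne', hx₁.ne', hx₂.ne', d1.ne', d2.ne', d3.ne', d4.ne'] at h1 h2
  simp only [Real.exp_add] at h1 h2
  have h1' : Real.exp α * ((1 + Real.exp α' * Real.exp t₁) * cα') =
      Real.exp α' * ((1 + Real.exp α * Real.exp t₁) * cα) := by
    have hne : Real.exp t₁ * f x₁ ≠ 0 := by positivity
    apply mul_left_cancel₀ hne; linear_combination (f x₁) * h1
  have h2' : Real.exp α * ((1 + Real.exp α' * Real.exp t₂) * cα') =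
      Real.exp α' * ((1 + Real.exp α * Real.exp t₂) * cα) := by
    have hne : Real.exp t₂ * f x₂ ≠ 0 := by positivity
    apply mul_left_cancel₀ hne; linear_combination (f x₂) * h2
  have hcc : cα = cα' := by
    have hu : Real.exp t₁ - Real.exp t₂ ≠ 0 :=
      sub_ne_zero_of_ne fun h => hsep (Real.exp_injective h)
    have hne : Real.exp α * Real.exp α' * (Real.exp t₁ - Real.exp t₂) ≠ 0 :=
      mul_ne_zero (mul_ne_zero (Real.exp_ne_zero α) (Real.exp_ne_zero α')) hu
    apply mul_left_cancel₀ hne; linear_combination h2' - h1'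
  have hexp : Real.exp α = Real.exp α' := by
    apply mul_right_cancel₀ hcα01.1.ne'
    linear_combination h1' + (Real.exp α + Real.exp α * Real.exp α' * Real.exp t₁) * hcc
  exact Real.exp_injective hexp
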